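/- arXiv:2403.02960 — 4 statements merged into one kernel-verified Lean document; each statement's English description precedes it below -/
import Mathlib

section
/- Let A be a finite set of acts and let S be a subset with ∅ ≠ S ⊊ A. If mML(S,A) < 0 then D_M(A) ⊆ S. -/
open Finset

/-- Upper expectation of `f` with respect to the set `P` of probability mass functions:
`Ē(f) = sup_{p ∈ P} ∑ ω, p ω * f ω` (the sup is attained when `P` is nonempty and compact). -/
noncomputable def upperExp {Ω : Type*} [Fintype Ω] (P : Set (Ω → ℝ)) (f : Ω → ℝ) : ℝ :=
  sSup ((fun p => ∑ ω, p ω * f ω) '' P)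

/-- `P` is a credal set: a nonempty compact set of probability mass functions on `Ω`. -/
def IsCredal {Ω : Type*} [Fintype Ω] (P : Set (Ω → ℝ)) : Prop :=
  P.Nonempty ∧ IsCompact P ∧ ∀ p ∈ P, (∀ ω, 0 ≤ p ω) ∧ ∑ ω, p ω = 1

/-- `a ≻ a'`: act `a` dominates act `a'`, i.e. `Ē(a' − a) < 0` (equivalently `E̲(a − a') > 0`). -/
def dominates {Ω : Type*} [Fintype Ω] (P : Set (Ω → ℝ)) (a a' : Ω → ℝ) : Prop :=
  upperExp P (a' - a) < 0

/-- `a` is a maximal act of `A`: `a ∈ A` and no `a' ∈ A` dominates `a`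
(membership in `D_M(A)`). -/
def maximalIn {Ω : Type*} [Fintype Ω] (P : Set (Ω → ℝ)) (A : Finset (Ω → ℝ))
    (a : Ω → ℝ) : Prop :=
  a ∈ A ∧ ∀ a' ∈ A, ¬ dominates P a' a

/-- `mML(S, A) = min_{a ∈ S} max_{a' ∈ A ∖ S} Ē(a' − a)`, valued in `EReal` so that the
maximum over the empty set is `−∞` (hence `mML(A, A) = −∞` when `S` is nonempty). -/
noncomputable def mML {Ω : Type*} [Fintype Ω] [DecidableEq (Ω → ℝ)]
    (P : Set (Ω → ℝ)) (S A : Finset (Ω → ℝ)) : EReal :=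
  S.inf fun a => (A \ S).sup fun a' => ((upperExp P (a' - a) : ℝ) : EReal)

/-- `MmL(S, A) = max_{a' ∈ A ∖ S} min_{a ∈ S} Ē(a' − a)`, valued in `EReal` so that the
maximum over the empty set is `−∞` (hence `MmL(A, A) = −∞`). -/
noncomputable def MmL {Ω : Type*} [Fintype Ω] [DecidableEq (Ω → ℝ)]
    (P : Set (Ω → ℝ)) (S A : Finset (Ω → ℝ)) : EReal :=
  (A \ S).sup fun a' => S.inf fun a => ((upperExp P (a' - a) : ℝ) : EReal)

theorem stmt2 {Ω : Type*} [Fintype Ω] [Nonempty Ω] [DecidableEq (Ω → ℝ)]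
    (P : Set (Ω → ℝ)) (hP : IsCredal P)
    (A S : Finset (Ω → ℝ)) (hS : S.Nonempty) (hSA : S ⊂ A)
    (hneg : mML P S A < 0) :
    ∀ a : Ω → ℝ, maximalIn P A a → a ∈ S := by
  intro a ha
  by_contra haS
  obtain ⟨a₀, ha₀S, ha₀⟩ := Finset.exists_mem_eq_inf S hS
    (fun a => (A \ S).sup fun a' => ((upperExp P (a' - a) : ℝ) : EReal))
  rw [mML, ha₀] at hneg
  have hmem : a ∈ A \ S := Finset.mem_sdiff.mpr ⟨ha.1, haS⟩
  have hlt : ((upperExp P (a - a₀) : ℝ) : EReal) < 0 :=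
    lt_of_le_of_lt (Finset.le_sup (f := fun a' => ((upperExp P (a' - a₀) : ℝ) : EReal)) hmem) hneg
  have : upperExp P (a - a₀) < 0 := by exact_mod_cast hlt
  exact ha.2 a₀ (hSA.1 ha₀S) this
end

section
/- Let A be a finite nonempty set of acts and let k ≥ 1. If S is an mML-optimal subset of A of budget k, i.e. ∅ ≠ S ⊆ A with |S| ≤ k and mML(S,A) ≤ mML(T,A) for every nonempty T ⊆ A with |T| ≤ k, then S ∩ D_M(A) ≠ ∅. -/
open Finset

section aux
variable {Ω : Type*} [Fintype Ω] {P : Set (Ω → ℝ)}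

lemma bddAbove_img (hP : IsCredal P) (f : Ω → ℝ) :
    BddAbove ((fun p => ∑ ω, p ω * f ω) '' P) := by
  have hc : Continuous fun p : Ω → ℝ => ∑ ω, p ω * f ω :=
    continuous_finset_sum _ fun ω _ => (continuous_apply ω).mul continuous_const
  exact (hP.2.1.image hc).bddAbove

lemma le_upperExp (hP : IsCredal P) {p : Ω → ℝ} (hp : p ∈ P) (f : Ω → ℝ) :
    ∑ ω, p ω * f ω ≤ upperExp P f :=
  le_csSup (bddAbove_img hP f) ⟨p, hp, rfl⟩

lemma upperExp_le (hP : IsCredal P) {f : Ω → ℝ} {c : ℝ}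
    (h : ∀ p ∈ P, ∑ ω, p ω * f ω ≤ c) : upperExp P f ≤ c := by
  refine csSup_le ?_ ?_
  · obtain ⟨p, hp⟩ := hP.1; exact ⟨_, p, hp, rfl⟩
  · rintro x ⟨p, hp, rfl⟩; exact h p hp

lemma upperExp_zero (hP : IsCredal P) : upperExp P (0 : Ω → ℝ) = 0 := by
  obtain ⟨p, hp⟩ := hP.1
  refine le_antisymm (upperExp_le hP fun q _ => by simp) ?_
  have := le_upperExp hP hp (0 : Ω → ℝ); simpa using this

lemma upperExp_add_le (hP : IsCredal P) (f g : Ω → ℝ) :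
    upperExp P (f + g) ≤ upperExp P f + upperExp P g := by
  refine upperExp_le hP fun p hp => ?_
  have : ∑ ω, p ω * (f + g) ω = (∑ ω, p ω * f ω) + ∑ ω, p ω * g ω := by
    rw [← Finset.sum_add_distrib]; exact Finset.sum_congr rfl fun ω _ => by simp [mul_add]
  rw [this]
  exact add_le_add (le_upperExp hP hp f) (le_upperExp hP hp g)

lemma dominates_trans (hP : IsCredal P) {a b c : Ω → ℝ}
    (h1 : dominates P a b) (h2 : dominates P b c) : dominates P a c := by
  have key : upperExp P (c - a) ≤ upperExp P (c - b) + upperExp P (b - a) := by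
    have : c - a = (c - b) + (b - a) := by ring
    rw [this]; exact upperExp_add_le hP _ _
  unfold dominates at *; linarith

lemma not_dominates_self (hP : IsCredal P) (a : Ω → ℝ) : ¬ dominates P a a := by
  unfold dominates
  rw [sub_self, upperExp_zero hP]; exact lt_irrefl 0

lemma nonneg_of_dominates (hP : IsCredal P) {m a : Ω → ℝ} (h : dominates P m a) :
    0 ≤ upperExp P (m - a) := by
  have key : upperExp P (0 : Ω → ℝ) ≤ upperExp P (m - a) + upperExp P (a - m) := by
    have : (0 : Ω → ℝ) = (m - a) + (a - m) := by ring
    rw [this]; exact upperExp_add_le hP _ _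
  rw [upperExp_zero hP] at key
  unfold dominates at h; linarith

end aux

open scoped Classical in
lemma exists_max_above {Ω : Type*} [Fintype Ω] {P : Set (Ω → ℝ)} (hP : IsCredal P)
    (A : Finset (Ω → ℝ)) :
    ∀ n (a : Ω → ℝ), a ∈ A → (A.filter (fun b => dominates P b a)).card ≤ n →
      ∃ m, (m ∈ A ∧ ∀ a' ∈ A, ¬ dominates P a' m) ∧ (m = a ∨ dominates P m a) := by
  intro n
  induction n with
  | zero =>
    intro a ha hcard
    refine ⟨a, ⟨ha, fun a' ha' hd => ?_⟩, Or.inl rfl⟩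
    have : a' ∈ A.filter (fun b => dominates P b a) := mem_filter.2 ⟨ha', hd⟩
    have := card_pos.2 ⟨a', this⟩
    omega
  | succ n ih =>
    intro a ha hcard
    by_cases hmax : ∀ a' ∈ A, ¬ dominates P a' a
    · exact ⟨a, ⟨ha, hmax⟩, Or.inl rfl⟩
    · push_neg at hmax
      obtain ⟨b, hbA, hba⟩ := hmax
      have hsub : A.filter (fun c => dominates P c b) ⊆ A.filter (fun c => dominates P c a) :=
        fun c hc => by
          rw [mem_filter] at hc ⊢
          exact ⟨hc.1, dominates_trans hP hc.2 hba⟩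
      have hne : b ∈ A.filter (fun c => dominates P c a) := mem_filter.2 ⟨hbA, hba⟩
      have hnb : b ∉ A.filter (fun c => dominates P c b) := fun h =>
        not_dominates_self hP b (mem_filter.1 h).2
      have hlt : (A.filter (fun c => dominates P c b)).card <
          (A.filter (fun c => dominates P c a)).card :=
        card_lt_card (ssubset_iff_of_subset hsub |>.2 ⟨b, hne, hnb⟩)
      obtain ⟨m, hm, hmb⟩ := ih b hbA (by omega)
      refine ⟨m, hm, Or.inr ?_⟩
      rcases hmb with rfl | hmb
      · exact hba
      · exact dominates_trans hP hmb hba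


theorem stmt3 {Ω : Type*} [Fintype Ω] [Nonempty Ω] [DecidableEq (Ω → ℝ)]
    (P : Set (Ω → ℝ)) (hP : IsCredal P)
    (A : Finset (Ω → ℝ)) (hA : A.Nonempty) (k : ℕ) (hk : 1 ≤ k)
    (S : Finset (Ω → ℝ)) (hS : S.Nonempty) (hSA : S ⊆ A) (hScard : S.card ≤ k)
    (hopt : ∀ T : Finset (Ω → ℝ), T ⊆ A → T.Nonempty → T.card ≤ k → mML P S A ≤ mML P T A) :
    ∃ a ∈ S, maximalIn P A a := by
  by_contra hcon
  push_neg at hcon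
  -- every a ∈ S has a maximal dominator outside S
  have key : ∀ a ∈ S, ∃ m ∈ A \ S, dominates P m a ∧ ∀ a' ∈ A, ¬ dominates P a' m := by
    intro a haS
    obtain ⟨m, hm, hma⟩ := exists_max_above hP A _ a (hSA haS) le_rfl
    have hdom : dominates P m a := by
      rcases hma with rfl | h
      · exact absurd ⟨hm.1, hm.2⟩ (hcon _ haS)
      · exact h
    have hmS : m ∉ S := fun hmS => hcon m hmS ⟨hm.1, hm.2⟩
    exact ⟨m, mem_sdiff.2 ⟨hm.1, hmS⟩, hdom, hm.2⟩
  -- mML S A ≥ 0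
  have h0 : (0 : EReal) ≤ mML P S A := by
    refine Finset.le_inf fun a haS => ?_
    obtain ⟨m, hmAS, hdom, _⟩ := key a haS
    refine le_trans ?_ (Finset.le_sup hmAS)
    exact_mod_cast nonneg_of_dominates hP hdom
  -- pick minimizer
  obtain ⟨a0, ha0S, ha0⟩ := Finset.exists_mem_eq_inf S hS
    (fun a => (A \ S).sup fun a' => ((upperExp P (a' - a) : ℝ) : EReal))
  obtain ⟨m, hmAS, hdom, hmmax⟩ := key a0 ha0S
  have hmA : m ∈ A := (mem_sdiff.1 hmAS).1
  have hmS : m ∉ S := (mem_sdiff.1 hmAS).2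
  set T : Finset (Ω → ℝ) := insert m (S.erase a0) with hT
  have hTA : T ⊆ A := by
    intro x hx
    rcases mem_insert.1 hx with rfl | hx
    · exact hmA
    · exact hSA (mem_of_mem_erase hx)
  have hTne : T.Nonempty := ⟨m, mem_insert_self _ _⟩
  have hTcard : T.card ≤ k := by
    rw [hT]
    have h1 := card_insert_le m (S.erase a0)
    have h2 := card_erase_of_mem ha0S
    have h3 := card_pos.2 hS
    omega
  have hle := hopt T hTA hTne hTcard
  -- mML T A < mML S A
  have hlt : mML P T A < mML P S A := by
    have hmT : m ∈ T := mem_insert_self _ _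
    refine lt_of_le_of_lt (Finset.inf_le hmT) ?_
    refine (Finset.sup_lt_iff (lt_of_lt_of_le (by norm_num) h0)).2 ?_
    intro a' ha'
    have ha'A : a' ∈ A := (mem_sdiff.1 ha').1
    have ha'T : a' ∉ T := (mem_sdiff.1 ha').2
    have ha'm : a' ≠ m := fun h => ha'T (h ▸ mem_insert_self _ _)
    have ha'e : a' ∉ S.erase a0 := fun h => ha'T (mem_insert_of_mem h)
    by_cases ha'a0 : a' = a0
    · subst ha'a0
      calc ((upperExp P (a' - m) : ℝ) : EReal) < (0 : EReal) := by exact_mod_cast hdom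
        _ ≤ mML P S A := h0
    · have ha'S : a' ∉ S := fun h => ha'e (mem_erase.2 ⟨ha'a0, h⟩)
      have hsub : upperExp P (a' - m) ≤ upperExp P (a' - a0) + upperExp P (a0 - m) := by
        have : a' - m = (a' - a0) + (a0 - m) := by ring
        rw [this]; exact upperExp_add_le hP _ _
      have hstep : upperExp P (a' - m) < upperExp P (a' - a0) := by
        have := hdom; unfold dominates at this; linarith
      calc ((upperExp P (a' - m) : ℝ) : EReal)
          < ((upperExp P (a' - a0) : ℝ) : EReal) := by exact_mod_cast hstep
        _ ≤ (A \ S).sup (fun a' => ((upperExp P (a' - a0) : ℝ) : EReal)) :=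
            Finset.le_sup (f := fun b => ((upperExp P (b - a0) : ℝ) : EReal)) (mem_sdiff.2 ⟨ha'A, ha'S⟩)
        _ = mML P S A := ha0.symm
  exact absurd hle (not_le.2 hlt)
end

section
/- Let A be a finite set of acts and let S be a subset with ∅ ≠ S ⊊ A. If MmL(S,A) < 0 then D_M(A) ⊆ S. -/
open Finset

theorem stmt7 {Ω : Type*} [Fintype Ω] [Nonempty Ω] [DecidableEq (Ω → ℝ)]
    (P : Set (Ω → ℝ)) (hP : IsCredal P)
    (A S : Finset (Ω → ℝ)) (hS : S.Nonempty) (hSA : S ⊂ A)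
    (hneg : MmL P S A < 0) :
    ∀ a : Ω → ℝ, maximalIn P A a → a ∈ S := by
  intro a ha
  by_contra haS
  have hmem : a ∈ A \ S := Finset.mem_sdiff.mpr ⟨ha.1, haS⟩
  have h1 : (S.inf fun b => ((upperExp P (a - b) : ℝ) : EReal)) < 0 :=
    lt_of_le_of_lt (Finset.le_sup (f := fun a' => S.inf fun b =>
      ((upperExp P (a' - b) : ℝ) : EReal)) hmem) hneg
  obtain ⟨b, hbS, hb⟩ := Finset.inf_lt_iff.mp h1
  have hb' : upperExp P (a - b) < 0 := by exact_mod_cast hb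
  exact ha.2 b (hSA.1 hbS) hb'
end

section
/- Let A be a finite set of acts with |A| > k ≥ 1. For each a ∈ A, let M_k(a) denote the k-th largest value of the multiset {Ē(a' − a) : a' ∈ A ∖ {a}}. Then the minimum of mML(S,A) over all nonempty subsets S ⊆ A with |S| ≤ k equals min_{a∈A} M_k(a). -/
open Finset

/-- The `k`-th largest element of a multiset of reals (for `1 ≤ k ≤ card`):
position `card − k` in the ascending sort. -/
noncomputable def kthLargest (m : Multiset ℝ) (k : ℕ) : ℝ :=
  (m.sort (· ≤ ·)).getD (Multiset.card m - k) 0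

open Classical in
lemma kth_count_ge (m : Multiset ℝ) (k : ℕ) (hk : 1 ≤ k) (hkm : k ≤ Multiset.card m) :
    k ≤ Multiset.card (m.filter (fun x => kthLargest m k ≤ x)) := by
  classical
  set l := m.sort (· ≤ ·) with hl
  have hlen : l.length = Multiset.card m := Multiset.length_sort _
  have hml : (l : Multiset ℝ) = m := Multiset.sort_eq _ _
  set i0 := Multiset.card m - k with hi0
  have hi0lt : i0 < l.length := by omega
  have hv : kthLargest m k = l[i0] := by
    rw [kthLargest, ← hl, List.getD_eq_getElem l 0 hi0lt]
  set v := l[i0] with hvdef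
  have hsorted : l.Pairwise (· ≤ ·) := m.pairwise_sort _
  have hall : ∀ x ∈ l.drop i0, v ≤ x := by
    intro x hx
    obtain ⟨j, hj, rfl⟩ := List.mem_iff_getElem.mp hx
    rw [List.getElem_drop]
    exact hsorted.rel_get_of_le (by simp : (⟨i0, hi0lt⟩ : Fin l.length) ≤ ⟨i0 + j, by
      simpa using ((List.length_drop : (l.drop i0).length = _) ▸ hj : j < l.length - i0) |> Nat.add_lt_of_lt_sub' ⟩)
  have hcard : Multiset.card (m.filter (fun x => kthLargest m k ≤ x))
      = (l.filter (fun x => decide (v ≤ x))).length := by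
    rw [hv, ← hml, Multiset.filter_coe, Multiset.coe_card]
  rw [hcard]
  have h1 : (l.drop i0).filter (fun x => decide (v ≤ x)) = l.drop i0 := by
    rw [List.filter_eq_self]
    intro x hx; simpa using hall x hx
  calc k = (l.drop i0).length := by rw [List.length_drop]; omega
  _ = ((l.drop i0).filter (fun x => decide (v ≤ x))).length := by rw [h1]
  _ ≤ (l.filter (fun x => decide (v ≤ x))).length :=
      ((List.drop_sublist i0 l).filter _).length_le

open Classical in
lemma kth_count_gt (m : Multiset ℝ) (k : ℕ) (hk : 1 ≤ k) (hkm : k ≤ Multiset.card m) :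
    Multiset.card (m.filter (fun x => kthLargest m k < x)) ≤ k - 1 := by
  classical
  set l := m.sort (· ≤ ·) with hl
  have hlen : l.length = Multiset.card m := Multiset.length_sort _
  have hml : (l : Multiset ℝ) = m := Multiset.sort_eq _ _
  set i0 := Multiset.card m - k with hi0
  have hi0lt : i0 < l.length := by omega
  have hv : kthLargest m k = l[i0] := by
    rw [kthLargest, ← hl, List.getD_eq_getElem l 0 hi0lt]
  set v := l[i0] with hvdef
  have hsorted : l.Pairwise (· ≤ ·) := m.pairwise_sort _
  have hall : ∀ x ∈ l.take (i0+1), x ≤ v := by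
    intro x hx
    obtain ⟨j, hj, rfl⟩ := List.mem_iff_getElem.mp hx
    have hj' : j < l.length := by
      have h2 := hj; rw [List.length_take] at h2; omega
    rw [List.getElem_take]
    have hji0 : j ≤ i0 := by
      have := hj; rw [List.length_take] at this; omega
    exact hsorted.rel_get_of_le (show (⟨j, hj'⟩ : Fin l.length) ≤ ⟨i0, hi0lt⟩ from hji0)
  have hcard : Multiset.card (m.filter (fun x => kthLargest m k < x))
      = (l.filter (fun x => decide (v < x))).length := by
    rw [hv, ← hml, Multiset.filter_coe, Multiset.coe_card]
  rw [hcard]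
  have hsplit : l = l.take (i0+1) ++ l.drop (i0+1) := (List.take_append_drop _ _).symm
  have h1 : (l.take (i0+1)).filter (fun x => decide (v < x)) = [] := by
    rw [List.filter_eq_nil_iff]
    intro x hx; simpa using not_lt.mpr (hall x hx)
  calc (l.filter (fun x => decide (v < x))).length
      = ((l.take (i0+1)).filter _).length + ((l.drop (i0+1)).filter (fun x => decide (v < x))).length := by
        conv_lhs => rw [hsplit]
        rw [List.filter_append, List.length_append]
  _ ≤ 0 + (l.drop (i0+1)).length := by
        rw [h1]; exact Nat.add_le_add le_rfl (List.length_filter_le _ _)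
  _ ≤ k - 1 := by rw [List.length_drop]; omega

open Classical in
lemma finset_count_eq {α : Type*} (B : Finset α) (f : α → ℝ) (p : ℝ → Prop) :
    (B.filter (fun b => p (f b))).card = Multiset.card ((B.val.map f).filter p) := by
  classical
  rw [Multiset.filter_map, Multiset.card_map]
  rfl

open Classical in
lemma exists_ge_kth {α : Type*} [DecidableEq α] (B : Finset α) (f : α → ℝ) (k : ℕ)
    (hk : 1 ≤ k) (hkB : k ≤ B.card) (T : Finset α) (hT : T.card < k) :
    ∃ b ∈ B, b ∉ T ∧ kthLargest (B.val.map f) k ≤ f b := by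
  classical
  set v := kthLargest (B.val.map f) k with hv
  have h1 : k ≤ (B.filter (fun b => v ≤ f b)).card := by
    rw [finset_count_eq]
    exact kth_count_ge _ _ hk (by simpa using hkB)
  have h2 : ((B.filter (fun b => v ≤ f b)) \ T).Nonempty := by
    apply Finset.card_pos.mp
    have := Finset.le_card_sdiff T (B.filter (fun b => v ≤ f b))
    omega
  obtain ⟨b, hb⟩ := h2
  rw [Finset.mem_sdiff, Finset.mem_filter] at hb
  exact ⟨b, hb.1.1, hb.2, hb.1.2⟩

open Classical in
lemma exists_T_kth {α : Type*} [DecidableEq α] (B : Finset α) (f : α → ℝ) (k : ℕ)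
    (hk : 1 ≤ k) (hkB : k ≤ B.card) :
    ∃ T ⊆ B, T.card ≤ k - 1 ∧ ∀ b ∈ B, b ∉ T → f b ≤ kthLargest (B.val.map f) k := by
  classical
  refine ⟨B.filter (fun b => kthLargest (B.val.map f) k < f b), Finset.filter_subset _ _, ?_, ?_⟩
  · rw [finset_count_eq]; exact kth_count_gt _ _ hk (by simpa using hkB)
  · intro b hb hbT
    by_contra h
    exact hbT (Finset.mem_filter.mpr ⟨hb, not_le.mp h⟩)

theorem stmt18 {Ω : Type*} [Fintype Ω] [Nonempty Ω] [DecidableEq (Ω → ℝ)]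
    (P : Set (Ω → ℝ)) (hP : IsCredal P)
    (A : Finset (Ω → ℝ)) (k : ℕ) (hk : 1 ≤ k) (hkA : k < A.card) :
    ((A.powerset.filter fun S => S.Nonempty ∧ S.card ≤ k).inf fun S => mML P S A) =
      A.inf fun a =>
        ((kthLargest (((A.erase a).val.map fun a' => upperExp P (a' - a))) k : ℝ) : EReal) := by
  classical
  apply le_antisymm
  · apply Finset.le_inf
    intro a ha
    have hcard_erase : k ≤ (A.erase a).card := by
      rw [Finset.card_erase_of_mem ha]; omega
    obtain ⟨T, hTsub, hTcard, hTprop⟩ :=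
      exists_T_kth (A.erase a) (fun a' => upperExp P (a' - a)) k hk hcard_erase
    set S := insert a T with hS
    have hSA : S ⊆ A := by
      intro x hx
      rcases Finset.mem_insert.mp hx with rfl | hx
      · exact ha
      · exact Finset.mem_of_mem_erase (hTsub hx)
    have hSmem : S ∈ A.powerset.filter (fun S => S.Nonempty ∧ S.card ≤ k) := by
      refine Finset.mem_filter.mpr ⟨Finset.mem_powerset.mpr hSA,
        ⟨a, Finset.mem_insert_self _ _⟩, ?_⟩
      have h2 : S.card ≤ T.card + 1 := hS ▸ Finset.card_insert_le a T
      omega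
    refine le_trans (Finset.inf_le hSmem) ?_
    rw [mML]
    refine le_trans (Finset.inf_le (Finset.mem_insert_self a T)) ?_
    apply Finset.sup_le
    intro a' ha'
    rw [EReal.coe_le_coe_iff]
    have ha'S : a' ∉ S := (Finset.mem_sdiff.mp ha').2
    have ha'1 : a' ∈ A.erase a :=
      Finset.mem_erase.mpr ⟨fun h => ha'S (h ▸ Finset.mem_insert_self a T),
        (Finset.mem_sdiff.mp ha').1⟩
    exact hTprop a' ha'1 (fun h => ha'S (Finset.mem_insert_of_mem h))
  · apply Finset.le_inf
    intro S hS
    have hS' := Finset.mem_filter.mp hS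
    have hSA : S ⊆ A := Finset.mem_powerset.mp hS'.1
    have hSne := hS'.2.1
    have hScard := hS'.2.2
    rw [mML]
    apply Finset.le_inf
    intro a haS
    have haA : a ∈ A := hSA haS
    refine le_trans (Finset.inf_le haA) ?_
    have hcard_erase : k ≤ (A.erase a).card := by
      rw [Finset.card_erase_of_mem haA]; omega
    have hTcard : (S.erase a).card < k := by
      have h1 : 1 ≤ S.card := Finset.card_pos.mpr hSne
      rw [Finset.card_erase_of_mem haS]; omega
    obtain ⟨b, hb, hbT, hbge⟩ :=
      exists_ge_kth (A.erase a) (fun a' => upperExp P (a' - a)) k hk hcard_erase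
        (S.erase a) hTcard
    have hbAS : b ∈ A \ S := by
      refine Finset.mem_sdiff.mpr ⟨Finset.mem_of_mem_erase hb, fun hbS => ?_⟩
      exact hbT (Finset.mem_erase.mpr ⟨Finset.ne_of_mem_erase hb, hbS⟩)
    refine le_trans ?_ (Finset.le_sup hbAS)
    exact_mod_cast hbge
end
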